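/- Let M and N be rectangle persistence modules with rectangles (a₁,b₁)×(a₂,b₂) and (c₁,d₁)×(c₂,d₂), and let ε ≥ 0. There exists a non-trivial morphism f: M → N(ε) (where N(ε) is the ε-shift of N) if and only if max{ max_{i}(c_i−a_i), max_{i}(d_i−b_i) } ≤ ε < min_{i}(d_i−a_i). -/

import Mathlib

open Classical

noncomputable section

/-- A point of the parameter space `ℝⁿ`. -/
abbrev Pt (n : ℕ) := Fin n → ℝ

/-- Shift of a point by the diagonal vector `(ε, …, ε)`. -/
def shiftPt {n : ℕ} (u : Pt n) (ε : ℝ) : Pt n := fun i => u i + ε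

lemma shiftPt_mono {n : ℕ} {u v : Pt n} (ε : ℝ) (h : u ≤ v) :
    shiftPt u ε ≤ shiftPt v ε := fun i => by show u i + ε ≤ v i + ε; linarith [h i]

lemma le_shiftPt {n : ℕ} (u : Pt n) {ε : ℝ} (hε : 0 ≤ ε) : u ≤ shiftPt u ε :=
  fun i => le_add_of_nonneg_right hε

/-- An `n`-parameter persistence module over the field `k`. -/
structure PersMod (k : Type) [Field k] (n : ℕ) where
  obj : Pt n → Type
  [acg : ∀ u, AddCommGroup (obj u)]
  [mod : ∀ u, Module k (obj u)]
  map : ∀ {u v : Pt n}, u ≤ v → (obj u →ₗ[k] obj v)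
  map_id : ∀ u : Pt n, map (le_refl u) = LinearMap.id
  map_comp : ∀ {u v w : Pt n} (h1 : u ≤ v) (h2 : v ≤ w),
    (map h2).comp (map h1) = map (h1.trans h2)

attribute [instance] PersMod.acg PersMod.mod

variable {k : Type} [Field k] {n : ℕ}

/-- A morphism of persistence modules. -/
structure PersHom (M N : PersMod k n) where
  app : ∀ u, M.obj u →ₗ[k] N.obj u
  natural : ∀ {u v : Pt n} (h : u ≤ v),
    (app v).comp (M.map h) = (N.map h).comp (app u)

/-- A morphism is trivial when every component is the zero map. -/
def PersHom.Trivial {M N : PersMod k n} (f : PersHom M N) : Prop := ∀ u, f.app u = 0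

/-- The `ε`-shift of a persistence module. -/
def PersMod.shift (M : PersMod k n) (ε : ℝ) : PersMod k n where
  obj u := M.obj (shiftPt u ε)
  map h := M.map (shiftPt_mono ε h)
  map_id u := M.map_id _
  map_comp h1 h2 := M.map_comp _ _

/-- `(f, g)` is an `ε`-interleaving pair between `M` and `N`. -/
def IsInterleavingPair (M N : PersMod k n) (ε : ℝ) (hε : 0 ≤ ε)
    (f : PersHom M (N.shift ε)) (g : PersHom N (M.shift ε)) : Prop :=
  (∀ u : Pt n, (g.app (shiftPt u ε)).comp (f.app u) =
      M.map ((le_shiftPt u hε).trans (le_shiftPt _ hε))) ∧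
  (∀ u : Pt n, (f.app (shiftPt u ε)).comp (g.app u) =
      N.map ((le_shiftPt u hε).trans (le_shiftPt _ hε)))

/-- `M` and `N` are `ε`-interleaved. -/
def Interleaved (M N : PersMod k n) (ε : ℝ) : Prop :=
  ∃ (hε : 0 ≤ ε) (f : PersHom M (N.shift ε)) (g : PersHom N (M.shift ε)),
    IsInterleavingPair M N ε hε f g

/-- The interleaving distance, with value in the extended reals. -/
def interleavingDist (M N : PersMod k n) : EReal :=
  sInf {x : EReal | ∃ ε : ℝ, Interleaved M N ε ∧ x = (ε : EReal)}

/-- `M` is `ε`-trivial : all transition maps `M_u → M_{u+(ε,…,ε)}` vanish. -/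
def EpsTrivial (M : PersMod k n) (ε : ℝ) : Prop :=
  ∀ (u : Pt n) (h : u ≤ shiftPt u ε), M.map h = 0

/-- The zero persistence module. -/
def ZeroMod (k : Type) [Field k] (n : ℕ) : PersMod k n where
  obj _ := PUnit
  map _ := 0
  map_id _ := by apply LinearMap.ext; intro x; exact Subsingleton.elim _ _
  map_comp _ _ := by apply LinearMap.ext; intro x; exact Subsingleton.elim _ _

/-- The space at `u` of the interval module on `I` : all of `k` if `u ∈ I`, `0` otherwise. -/
def segSpace (k : Type) [Field k] {n : ℕ} (I : Set (Pt n)) (u : Pt n) : Submodule k k where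
  carrier := {x | u ∉ I → x = 0}
  add_mem' := by intro x y hx hy h; simp only [Set.mem_setOf_eq] at *; rw [hx h, hy h, add_zero]
  zero_mem' := fun _ => rfl
  smul_mem' := by intro c x hx h; simp only [Set.mem_setOf_eq] at *; rw [hx h, smul_zero]

/-- The interval persistence module on an order-convex set `I` : `k` on `I` with identity
internal transition maps, `0` elsewhere. -/
def IntervalMod (k : Type) [Field k] {n : ℕ} (I : Set (Pt n)) (hI : I.OrdConnected) :
    PersMod k n where
  obj u := segSpace k I u
  map {u v} h :=
    { toFun := fun x => ⟨if v ∈ I then (x : k) else 0, by intro hv; simp [hv]⟩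
      map_add' := by intro x y; apply Subtype.ext; by_cases hv : v ∈ I <;> simp [hv]
      map_smul' := by intro c x; apply Subtype.ext; by_cases hv : v ∈ I <;> simp [hv] }
  map_id u := by
    apply LinearMap.ext; intro x
    apply Subtype.ext
    by_cases hu : u ∈ I
    · simp [hu]
    · simp [hu, x.2 hu]
  map_comp {u v w} h1 h2 := by
    apply LinearMap.ext; intro x
    apply Subtype.ext
    by_cases hw : w ∈ I
    · by_cases hv : v ∈ I
      · simp [hw, hv]
      · by_cases hu : u ∈ I
        · exact absurd (hI.out hu hw ⟨h1, h2⟩) hv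
        · simp [hw, hv, x.2 hu]
    · simp [hw]

/-- The open box `∏ᵢ (aᵢ, bᵢ)` with extended-real endpoints. -/
def box {n : ℕ} (a b : Fin n → EReal) : Set (Pt n) :=
  {u | ∀ i, a i < (u i : EReal) ∧ (u i : EReal) < b i}

lemma box_ordConnected {n : ℕ} (a b : Fin n → EReal) : (box a b).OrdConnected := by
  constructor
  intro u hu w hw v hv i
  exact ⟨lt_of_lt_of_le (hu i).1 (by exact_mod_cast hv.1 i),
    lt_of_le_of_lt (by exact_mod_cast hv.2 i) (hw i).2⟩

/-- The rectangle persistence module with underlying open rectangle `∏ᵢ (aᵢ, bᵢ)`. -/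
def RectMod (k : Type) [Field k] {n : ℕ} (a b : Fin n → EReal) : PersMod k n :=
  IntervalMod k (box a b) (box_ordConnected a b)

/-- Subtraction of extended reals with the conventions `(±∞) − (±∞) = 0`. -/
def esub (x y : EReal) : EReal :=
  if (x = ⊤ ∧ y = ⊤) ∨ (x = ⊥ ∧ y = ⊥) then 0 else x - y

/-- Absolute value on the extended reals (`|±∞| = +∞`). -/
def eabs (x : EReal) : EReal := max x (-x)

/-- The `ℓ^∞`-distance `‖x − y‖_∞` on extended `ℝⁿ`. -/
def supDist {n : ℕ} (x y : Fin n → EReal) : EReal := ⨆ i, eabs (esub (x i) (y i))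

/-- The closed formula for the interleaving distance between the rectangle modules with
rectangles `∏ (aᵢ, bᵢ)` and `∏ (cᵢ, dᵢ)`. -/
def dIFormula {n : ℕ} (a b c d : Fin n → EReal) : EReal :=
  min (max (⨅ i, esub (b i) (a i) / 2) (⨅ i, esub (d i) (c i) / 2))
      (max (supDist c a) (supDist d b))

/-- `M` and `N` are isomorphic persistence modules. -/
def PersIso (M N : PersMod k n) : Prop :=
  ∃ f : PersHom M N, ∀ u, Function.Bijective (f.app u)

/-- `M` is a non-zero persistence module. -/
def PersMod.Nonzero (M : PersMod k n) : Prop := ∃ (u : Pt n) (x : M.obj u), x ≠ 0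

/-- Direct sum of two persistence modules. -/
def dirSum (M N : PersMod k n) : PersMod k n where
  obj u := M.obj u × N.obj u
  map h := (M.map h).prodMap (N.map h)
  map_id u := by
    apply LinearMap.ext; intro x
    show ((M.map (le_refl u)) x.1, (N.map (le_refl u)) x.2) = x
    rw [M.map_id, N.map_id]; rfl
  map_comp h1 h2 := by
    apply LinearMap.ext; intro x
    show ((M.map _) ((M.map _) x.1), (N.map _) ((N.map _) x.2))
      = ((M.map _) x.1, (N.map _) x.2)
    have hM : (M.map h2) ((M.map h1) x.1) = (M.map (h1.trans h2)) x.1 := by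
      rw [← M.map_comp h1 h2]; rfl
    have hN : (N.map h2) ((N.map h1) x.2) = (N.map (h1.trans h2)) x.2 := by
      rw [← N.map_comp h1 h2]; rfl
    rw [hM, hN]

/-- Zigzag-connectedness of a subset of `ℝⁿ`. -/
def ZigzagConnected {n : ℕ} (I : Set (Pt n)) : Prop :=
  ∀ u ∈ I, ∀ v ∈ I,
    Relation.ReflTransGen (fun x y => x ∈ I ∧ y ∈ I ∧ (x ≤ y ∨ y ≤ x)) u v

/-- `I` is an interval in `ℝⁿ`: nonempty, order-convex and zigzag-connected. -/
def IsInterval {n : ℕ} (I : Set (Pt n)) : Prop :=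
  I.Nonempty ∧ I.OrdConnected ∧ ZigzagConnected I

/-- A partial multibijection `Fin m ⇸ Fin k'`, encoded by an `Option`-valued map that is
injective on matched indices. -/
def PartialInj {m k' : ℕ} (σ : Fin m → Option (Fin k')) : Prop :=
  ∀ i j l, σ i = some l → σ j = some l → i = j

/-- `σ` is an `ε`-matching between the barcodes `A` and `B` (families of intervals). -/
def IsEpsMatching (k : Type) [Field k] {n m k' : ℕ}
    (A : Fin m → Set (Pt n)) (hA : ∀ i, (A i).OrdConnected)
    (B : Fin k' → Set (Pt n)) (hB : ∀ j, (B j).OrdConnected)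
    (σ : Fin m → Option (Fin k')) (ε : ℝ) : Prop :=
  PartialInj σ ∧
  (∀ i, σ i = none → EpsTrivial (IntervalMod k (A i) (hA i)) (2 * ε)) ∧
  (∀ j, (∀ i, σ i ≠ some j) → EpsTrivial (IntervalMod k (B j) (hB j)) (2 * ε)) ∧
  (∀ i j, σ i = some j →
    Interleaved (IntervalMod k (A i) (hA i)) (IntervalMod k (B j) (hB j)) ε)

/-- The bottleneck distance between the interval decomposable modules with barcodes
`A` and `B`. -/
def bottleneckDist (k : Type) [Field k] {n m k' : ℕ}
    (A : Fin m → Set (Pt n)) (hA : ∀ i, (A i).OrdConnected)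
    (B : Fin k' → Set (Pt n)) (hB : ∀ j, (B j).OrdConnected) : EReal :=
  sInf {x : EReal | ∃ (ε : ℝ) (σ : Fin m → Option (Fin k')),
    0 ≤ ε ∧ IsEpsMatching k A hA B hB σ ε ∧ x = (ε : EReal)}


/-! ### Auxiliary lemmas for the main theorem -/

lemma aux_exists_real_btwn {x y : EReal} (h : x < y) :
    ∃ s : ℝ, x < (s : EReal) ∧ (s : EReal) < y := by
  obtain ⟨z, hz1, hz2⟩ := exists_between h
  lift z to ℝ using ⟨ne_top_of_lt hz2, ne_bot_of_gt hz1⟩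
  exact ⟨z, hz1, hz2⟩

lemma aux_fin2_iInf (f : Fin 2 → EReal) : (⨅ i, f i) = min (f 0) (f 1) := by
  apply le_antisymm
  · exact le_min (iInf_le f 0) (iInf_le f 1)
  · refine le_iInf fun i => ?_
    fin_cases i
    · exact min_le_left _ _
    · exact min_le_right _ _

lemma aux_lemA {a c : EReal} {ε : ℝ} (ha : a ≠ ⊤) (hc : c ≠ ⊤) (hε : 0 ≤ ε) :
    esub c a ≤ (ε : EReal) ↔ c ≤ a + ε := by
  unfold esub
  split_ifs with h
  · rcases h with ⟨h1, _⟩ | ⟨h1, h2⟩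
    · exact absurd h1 hc
    · subst h1; subst h2
      simp [EReal.bot_add, EReal.coe_nonneg.2 hε]
  · rw [EReal.sub_le_iff_le_add (Or.inr (EReal.coe_ne_top ε)) (Or.inl ha), add_comm]

lemma aux_lemB {b d : EReal} {ε : ℝ} (hb : b ≠ ⊥) (hd : d ≠ ⊥) (hε : 0 ≤ ε) :
    esub d b ≤ (ε : EReal) ↔ d ≤ b + ε := by
  unfold esub
  split_ifs with h
  · rcases h with ⟨h1, h2⟩ | ⟨h1, _⟩
    · subst h1; subst h2
      simp [EReal.top_add_coe, EReal.coe_nonneg.2 hε]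
    · exact absurd h1 hd
  · rw [EReal.sub_le_iff_le_add (Or.inl hb) (Or.inr (EReal.coe_ne_bot ε)), add_comm]

lemma aux_lemC {a d : EReal} {ε : ℝ} (ha : a ≠ ⊤) (hd : d ≠ ⊥) :
    (ε : EReal) < esub d a ↔ a + ε < d := by
  unfold esub
  split_ifs with h
  · rcases h with ⟨_, h2⟩ | ⟨h1, _⟩
    · exact absurd h2 ha
    · exact absurd h1 hd
  · rw [EReal.lt_sub_iff_add_lt (Or.inr (EReal.coe_ne_top ε)) (Or.inl ha), add_comm]

lemma aux_sub_real_lt {x : EReal} {r s : ℝ} : x - (r : EReal) < s ↔ x < ((s + r : ℝ) : EReal) := by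
  induction x using EReal.rec with
  | bot => simp [EReal.bot_sub]
  | coe t =>
    rw [← EReal.coe_sub]
    exact_mod_cast sub_lt_iff_lt_add
  | top => simp [EReal.top_sub_coe]

lemma aux_mem_box {n : ℕ} {a b : Fin n → EReal} {u : Pt n} :
    u ∈ box a b ↔ ∀ i, a i < (u i : EReal) ∧ (u i : EReal) < b i := Iff.rfl

/-- The combinatorial heart of the naturality argument. -/
lemma aux_box_claim {a b c d : Fin 2 → EReal} {ε : ℝ}
    (p1 : ∀ i, c i ≤ a i + (ε : EReal)) (p2 : ∀ i, d i ≤ b i + (ε : EReal))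
    {u v : Pt 2} (hu : u ∈ box a b) (hv : shiftPt v ε ∈ box c d) (huv : u ≤ v) :
    v ∈ box a b ∧ shiftPt u ε ∈ box c d := by
  have hvd : ∀ i, (v i : EReal) + ε < d i := by
    intro i
    have := (hv i).2
    rwa [show shiftPt v ε i = v i + ε from rfl, EReal.coe_add] at this
  constructor
  · intro i
    refine ⟨lt_of_lt_of_le (hu i).1 (by exact_mod_cast huv i), ?_⟩
    by_contra hcon
    push_neg at hcon
    exact absurd (lt_of_lt_of_le (hvd i) (p2 i)) (not_lt.2 (add_le_add_left hcon _))
  · intro i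
    rw [show shiftPt u ε i = u i + ε from rfl, EReal.coe_add]
    constructor
    · exact lt_of_le_of_lt (p1 i) (EReal.add_lt_add_right_coe (hu i).1 ε)
    · exact lt_of_le_of_lt (add_le_add_left (by exact_mod_cast huv i) _) (hvd i)

theorem exists_nontrivial_morphism_to_shift_iff (a b c d : Fin 2 → EReal)
    (ha : ∀ i, a i ≠ ⊤) (hb : ∀ i, b i ≠ ⊥)
    (hc : ∀ i, c i ≠ ⊤) (hd : ∀ i, d i ≠ ⊥) (hab : ∀ i, a i < b i) (hcd : ∀ i, c i < d i)
    (ε : ℝ) (hε : 0 ≤ ε) :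
    (∃ f : PersHom (RectMod k a b) ((RectMod k c d).shift ε), ¬ f.Trivial) ↔
      (max (⨆ i, esub (c i) (a i)) (⨆ i, esub (d i) (b i)) ≤ (ε : EReal) ∧
        (ε : EReal) < ⨅ i, esub (d i) (a i)) := by
  have hRHS : (max (⨆ i, esub (c i) (a i)) (⨆ i, esub (d i) (b i)) ≤ (ε : EReal) ∧
        (ε : EReal) < ⨅ i, esub (d i) (a i)) ↔
      ((∀ i, c i ≤ a i + (ε : EReal)) ∧ (∀ i, d i ≤ b i + (ε : EReal)) ∧
        (∀ i, a i + (ε : EReal) < d i)) := by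
    constructor
    · rintro ⟨h1, h2⟩
      refine ⟨fun i => (aux_lemA (ha i) (hc i) hε).1
          (le_trans (le_trans (le_iSup (fun i => esub (c i) (a i)) i) (le_max_left _ _)) h1),
        fun i => (aux_lemB (hb i) (hd i) hε).1
          (le_trans (le_trans (le_iSup (fun i => esub (d i) (b i)) i) (le_max_right _ _)) h1),
        fun i => (aux_lemC (ha i) (hd i)).1 (lt_of_lt_of_le h2 (iInf_le _ i))⟩
    · rintro ⟨p1, p2, p3⟩
      refine ⟨max_le (iSup_le fun i => (aux_lemA (ha i) (hc i) hε).2 (p1 i))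
          (iSup_le fun i => (aux_lemB (hb i) (hd i) hε).2 (p2 i)), ?_⟩
      rw [aux_fin2_iInf]
      exact lt_min ((aux_lemC (ha 0) (hd 0)).2 (p3 0)) ((aux_lemC (ha 1) (hd 1)).2 (p3 1))
  rw [hRHS]
  constructor
  · -- Forward direction
    rintro ⟨f, hf⟩
    rw [PersHom.Trivial] at hf
    push_neg at hf
    obtain ⟨u, hu0⟩ := hf
    have hx : ∃ x : (RectMod k a b).obj u, f.app u x ≠ 0 := by
      by_contra h
      push_neg at h
      exact hu0 (LinearMap.ext fun x => h x)
    obtain ⟨x, hx0⟩ := hx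
    have hyval : (f.app u x).1 ≠ 0 := by
      intro h
      exact hx0 (Subtype.ext h)
    have hJu : shiftPt u ε ∈ box c d := by
      by_contra h
      exact hyval ((f.app u x).2 h)
    have hxval : x.1 ≠ 0 := by
      intro h
      apply hx0
      rw [show x = 0 from Subtype.ext h]
      exact map_zero _
    have hIu : u ∈ box a b := by
      by_contra h
      exact hxval (x.2 h)
    have hJu' : ∀ i, c i < (u i : EReal) + ε ∧ (u i : EReal) + ε < d i := by
      intro i
      have := hJu i
      rwa [show shiftPt u ε i = u i + ε from rfl, EReal.coe_add] at this
    refine ⟨?_, ?_, ?_⟩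
    · -- c i ≤ a i + ε
      intro i
      by_contra hcon
      push_neg at hcon
      have h5 : a i < c i - ε :=
        (EReal.lt_sub_iff_add_lt (Or.inl (EReal.coe_ne_bot ε))
          (Or.inl (EReal.coe_ne_top ε))).2 hcon
      obtain ⟨s, hs1, hs2⟩ := aux_exists_real_btwn (lt_min h5 (hIu i).1)
      have hs3 : ((s + ε : ℝ) : EReal) < c i := by
        rw [EReal.coe_add]
        exact (EReal.lt_sub_iff_add_lt (Or.inl (EReal.coe_ne_bot ε))
          (Or.inl (EReal.coe_ne_top ε))).1 (hs2.trans_le (min_le_left _ _))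
      have hs4 : s < u i := by exact_mod_cast hs2.trans_le (min_le_right _ _)
      set v : Pt 2 := fun j => if j = i then s else u j with hvdef
      have hvu : v ≤ u := by
        intro j
        by_cases hj : j = i
        · subst hj; simp only [hvdef, if_pos rfl]; exact hs4.le
        · simp only [hvdef, if_neg hj]; exact le_refl _
      have hvI : v ∈ box a b := by
        intro j
        by_cases hj : j = i
        · subst hj
          simp only [hvdef, if_pos rfl]
          exact ⟨hs1, lt_trans (by exact_mod_cast hs4) (hIu j).2⟩
        · simp only [hvdef, if_neg hj]; exact hIu j
      have hvJ : shiftPt v ε ∉ box c d := by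
        intro hmem
        have h6 := (hmem i).1
        rw [show shiftPt v ε i = v i + ε from rfl] at h6
        rw [show v i = s from by simp [hvdef]] at h6
        exact absurd h6 (not_lt.2 hs3.le)
      set x' : (RectMod k a b).obj v := ⟨x.1, fun hc' => absurd hvI hc'⟩ with hx'def
      have hMx : ((RectMod k a b).map hvu) x' = x := by
        apply Subtype.ext
        show (if u ∈ box a b then x'.1 else 0) = x.1
        rw [if_pos hIu]
      have happv : f.app v x' = 0 := Subtype.ext ((f.app v x').2 hvJ)
      have hnat := LinearMap.congr_fun (f.natural hvu) x'
      simp only [LinearMap.comp_apply] at hnat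
      rw [hMx, happv, map_zero] at hnat
      exact hx0 hnat
    · -- d i ≤ b i + ε
      intro i
      by_contra hcon
      push_neg at hcon
      have hbt : b i ≠ ⊤ := by
        intro h
        rw [h, EReal.top_add_coe] at hcon
        exact not_top_lt hcon
      obtain ⟨t, ht⟩ : ∃ t : ℝ, b i = (t : EReal) :=
        ⟨(b i).toReal, (EReal.coe_toReal hbt (hb i)).symm⟩
      set w : Pt 2 := fun j => if j = i then t else u j with hwdef
      have huit : u i < t := by
        have := (hIu i).2
        rw [ht] at this
        exact_mod_cast this
      have huw : u ≤ w := by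
        intro j
        by_cases hj : j = i
        · subst hj; simp only [hwdef, if_pos rfl]; exact huit.le
        · simp only [hwdef, if_neg hj]; exact le_refl _
      have hwI : w ∉ box a b := by
        intro hmem
        have h7 := (hmem i).2
        rw [show w i = t from by simp [hwdef], ht] at h7
        exact lt_irrefl _ h7
      have hwJ : shiftPt w ε ∈ box c d := by
        intro j
        by_cases hj : j = i
        · subst hj
          rw [show shiftPt w ε j = w j + ε from rfl,
            show w j = t from by simp [hwdef], EReal.coe_add]
          constructor
          · calc c j < (u j : EReal) + ε := (hJu' j).1
              _ ≤ (t : EReal) + ε := add_le_add_left (by exact_mod_cast huit.le) _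
          · rw [← ht]; exact hcon
        · have hww : shiftPt w ε j = shiftPt u ε j := by
            simp [hwdef, shiftPt, hj]
          rw [hww]
          exact hJu j
      have hMx : ((RectMod k a b).map huw) x = 0 := by
        apply Subtype.ext
        show (if w ∈ box a b then x.1 else 0) = 0
        rw [if_neg hwI]
      have hnat := LinearMap.congr_fun (f.natural huw) x
      simp only [LinearMap.comp_apply] at hnat
      rw [hMx, map_zero] at hnat
      apply hyval
      have hval : (if shiftPt w ε ∈ box c d then (f.app u x).1 else 0) = 0 :=
        congrArg Subtype.val hnat.symm
      rwa [if_pos hwJ] at hval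
    · -- a i + ε < d i
      intro i
      calc a i + (ε : EReal) < (u i : EReal) + ε := EReal.add_lt_add_right_coe (hIu i).1 ε
        _ < d i := (hJu' i).2
  · -- Backward direction
    rintro ⟨p1, p2, p3⟩
    refine ⟨⟨fun u =>
      { toFun := fun x => ⟨if shiftPt u ε ∈ box c d then x.1 else 0, fun h => if_neg h⟩
        map_add' := by
          intro x y
          apply Subtype.ext
          show (if shiftPt u ε ∈ box c d then x.1 + y.1 else 0)
              = (if shiftPt u ε ∈ box c d then x.1 else 0)
                + (if shiftPt u ε ∈ box c d then y.1 else 0)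
          split_ifs with h' <;> simp
        map_smul' := by
          intro r x
          apply Subtype.ext
          show (if shiftPt u ε ∈ box c d then r • x.1 else 0)
              = r • (if shiftPt u ε ∈ box c d then x.1 else 0)
          split_ifs with h' <;> simp }, ?_⟩, ?_⟩
    · -- naturality
      intro u v h
      apply LinearMap.ext
      intro x
      apply Subtype.ext
      show (if shiftPt v ε ∈ box c d then
          (if v ∈ box a b then x.1 else 0) else 0) =
        (if shiftPt v ε ∈ box c d then
          (if shiftPt u ε ∈ box c d then x.1 else 0) else 0)
      by_cases hvJ : shiftPt v ε ∈ box c d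
      · by_cases huI : u ∈ box a b
        · obtain ⟨hvI, huJ⟩ := aux_box_claim p1 p2 huI hvJ h
          rw [if_pos hvI, if_pos huJ]
        · have hx0 : x.1 = 0 := x.2 huI
          simp [hx0]
      · rw [if_neg hvJ, if_neg hvJ]
    · -- nontriviality
      intro htriv
      have hex : ∀ i : Fin 2, ∃ s : ℝ,
          (a i < (s : EReal) ∧ (s : EReal) < b i) ∧
          (c i < ((s + ε : ℝ) : EReal) ∧ ((s + ε : ℝ) : EReal) < d i) := by
        intro i
        have hca : c i - ε ≤ a i := by
          rw [EReal.sub_le_iff_le_add (Or.inl (EReal.coe_ne_bot ε))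
            (Or.inl (EReal.coe_ne_top ε))]
          exact p1 i
        have had : a i < d i - ε :=
          (EReal.lt_sub_iff_add_lt (Or.inl (EReal.coe_ne_bot ε))
            (Or.inl (EReal.coe_ne_top ε))).2 (p3 i)
        have hcb : c i - ε < b i := lt_of_le_of_lt hca (hab i)
        have hcd' : c i - ε < d i - ε := lt_of_le_of_lt hca had
        have hmax : max (a i) (c i - ε) < min (b i) (d i - ε) :=
          max_lt (lt_min (hab i) had) (lt_min hcb hcd')
        obtain ⟨s, hs1, hs2⟩ := aux_exists_real_btwn hmax
        refine ⟨s, ⟨lt_of_le_of_lt (le_max_left _ _) hs1,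
            lt_of_lt_of_le hs2 (min_le_left _ _)⟩, ?_, ?_⟩
        · exact aux_sub_real_lt.1 (lt_of_le_of_lt (le_max_right _ _) hs1)
        · rw [EReal.coe_add]
          exact (EReal.lt_sub_iff_add_lt (Or.inl (EReal.coe_ne_bot ε))
            (Or.inl (EReal.coe_ne_top ε))).1 (lt_of_lt_of_le hs2 (min_le_right _ _))
      choose s hsab hscd using hex
      have hu0I : (s : Pt 2) ∈ box a b := fun i => hsab i
      have hu0J : shiftPt s ε ∈ box c d := by
        intro i
        rw [show shiftPt s ε i = s i + ε from rfl]
        exact hscd i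
      have h1 := LinearMap.congr_fun (htriv s)
        (⟨1, fun h => absurd hu0I h⟩ : segSpace k (box a b) s)
      have h2 : (if shiftPt s ε ∈ box c d then (1 : k) else 0) = 0 :=
        congrArg Subtype.val h1
      rw [if_pos hu0J] at h2
      exact one_ne_zero h2

end
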